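/- In a partially additive field with a unit system U (a set containing exactly one non-zero element from each summability equivalence class), every element a ∈ Q can be written uniquely as a = v × u with v dimensionless and u ∈ U. -/
import Mathlib


/-- A partially additive field: partial addition (modeled via `Option`, `none` = undefined),
total multiplication, per-element zeros, etc. -/
structure PAF (Q : Type*) where
  add : Q → Q → Option Q
  mul : Q → Q → Q
  zero : Q → Q
  one : Q
  neg : Q → Q
  inv : Q → Q
  add_comm : ∀ a b, add a b = add b a
  mul_comm : ∀ a b, mul a b = mul b a
  add_assoc : ∀ a b c, (add a b).bind (fun x => add x c) = (add b c).bind (fun x => add a x)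
  mul_assoc : ∀ a b c, mul (mul a b) c = mul a (mul b c)
  left_distrib : ∀ a b c, (add b c).map (mul a) = add (mul a b) (mul a c)
  add_zero : ∀ a, add a (zero a) = some a
  zero_unique : ∀ a z, add a z = some a → z = zero a
  mul_one : ∀ a, mul a one = a
  add_neg : ∀ a, add a (neg a) = some (zero a)
  mul_inv : ∀ a, (¬ ∃ b, a = zero b) → mul a (inv a) = one
  nontrivial : ∀ a b, a = zero b → ∃ c, (¬ ∃ d, c = zero d) ∧ a = zero c

namespace PAF
variable {Q : Type*} (F : PAF Q)

/-- `a` is a zero element. -/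
def IsZero (a : Q) : Prop := ∃ b, a = F.zero b

/-- `a` and `b` are summable (their sum is defined). -/
def Summable (a b : Q) : Prop := (F.add a b).isSome

/-- `a` is dimensionless iff it is summable with `1`. -/
def Dimensionless (a : Q) : Prop := F.Summable a F.one

/-- `n`-th power via the total multiplication. -/
def pow (a : Q) : ℕ → Q
  | 0 => F.one
  | n + 1 => F.mul a (pow a n)

end PAF

theorem PAF.summable_mul {Q : Type*} (F : PAF Q) {a b : Q} (c : Q)
    (h : F.Summable a b) : F.Summable (F.mul c a) (F.mul c b) := by
  have hd := F.left_distrib c a b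
  unfold PAF.Summable at *
  rw [← hd]
  cases hab : F.add a b with
  | none => rw [hab] at h; simp at h
  | some x => simp

/-- Every element factors uniquely as a dimensionless value times a unit from a unit system. -/
theorem value_unit_factorization {Q : Type*} (F : PAF Q) (U : Set Q)
    (hU_nonzero : ∀ u ∈ U, ¬ F.IsZero u)
    (hU_unique : ∀ a : Q, ∃! u : Q, u ∈ U ∧ F.Summable a u) :
    ∀ a : Q, ∃! p : Q × Q, F.Dimensionless p.1 ∧ p.2 ∈ U ∧ a = F.mul p.1 p.2 := by
  intro a
  obtain ⟨u, ⟨huU, hau⟩, huniq⟩ := hU_unique a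
  have hune : ¬ F.IsZero u := hU_nonzero u huU
  have hinv : F.mul u (F.inv u) = F.one := F.mul_inv u hune
  set v := F.mul a (F.inv u) with hv
  have hvu : a = F.mul v u := by
    rw [hv, F.mul_assoc, F.mul_comm (F.inv u) u, hinv, F.mul_one]
  have hdim : F.Dimensionless v := by
    have h2 := F.summable_mul (F.inv u) hau
    rw [F.mul_comm (F.inv u) a, F.mul_comm (F.inv u) u, hinv] at h2
    exact h2
  refine ⟨(v, u), ⟨hdim, huU, hvu⟩, ?_⟩
  rintro ⟨v', u'⟩ ⟨hd', hU', heq⟩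
  have hau' : F.Summable a u' := by
    have h3 := F.summable_mul u' hd'
    rw [F.mul_one, F.mul_comm u' v', ← heq] at h3
    exact h3
  have hu' : u' = u := huniq u' ⟨hU', hau'⟩
  subst hu'
  have hv' : v' = v := by
    rw [hv, heq, F.mul_assoc, hinv, F.mul_one]
  simp [hv']
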